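/- Let (X,d) be a complete metric space and T : X → X a continuous map. Suppose there exist functions φₙ : X × X → [0,∞) with d(Tⁿx, Tⁿy) ≤ φₙ(x,y) for all x,y ∈ X and n ∈ ℕ, such that φₙ converges pointwise to a function φ : X × X → [0,∞), the convergence being uniform on B × B for every bounded subset B ⊂ X; and suppose there is a function ψ : [0,∞) → [0,∞), nondecreasing, right upper semicontinuous, with ψ(t) < t for all t > 0, such that φ(x,y) ≤ ψ(M(x,y)) for all x,y, where M(x,y) = max{d(x,y), d(Tx,x), d(Ty,y), d(Ty,x), d(Tx,y)}. If there exists x₀ ∈ X whose orbit {Tⁿx₀ : n ∈ ℕ} is bounded, then T has a unique fixed point z ∈ X and the sequence Tⁿx₀ converges to z. -/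

import Mathlib

open Set Filter Function

/-- Main Theorem: a continuous asymptotic pointwise contraction on a
complete metric space with a bounded orbit has a unique fixed point, and the
iterates from the point with bounded orbit converge to it. -/
theorem stmt_4 {X : Type*} [MetricSpace X] [CompleteSpace X]
    (T : X → X) (hT : Continuous T)
    (φ : ℕ → X → X → ℝ) (φlim : X → X → ℝ)
    (hφ_nonneg : ∀ n x y, 0 ≤ φ n x y)
    (hφlim_nonneg : ∀ x y, 0 ≤ φlim x y)
    (hd : ∀ n x y, dist (T^[n] x) (T^[n] y) ≤ φ n x y)
    (hconv : ∀ x y, Tendsto (fun n => φ n x y) atTop (nhds (φlim x y)))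
    (hunif : ∀ B : Set X, Bornology.IsBounded B → ∀ ε > 0, ∃ N, ∀ n ≥ N,
      ∀ x ∈ B, ∀ y ∈ B, |φ n x y - φlim x y| ≤ ε)
    (ψ : ℝ → ℝ)
    (hψ_nonneg : ∀ t, 0 ≤ t → 0 ≤ ψ t)
    (hψ_mono : ∀ s t, 0 ≤ s → s ≤ t → ψ s ≤ ψ t)
    (hψ_usc : ∀ t₀, 0 ≤ t₀ → limsup ψ (nhdsWithin t₀ (Ioi t₀)) ≤ ψ t₀)
    (hψ_lt : ∀ t, 0 < t → ψ t < t)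
    (hφψ : ∀ x y, φlim x y ≤ ψ (max (dist x y) (max (dist (T x) x)
      (max (dist (T y) y) (max (dist (T y) x) (dist (T x) y))))))
    (x₀ : X) (hx₀ : Bornology.IsBounded (Set.range fun n => T^[n] x₀)) :
    ∃ z : X, T z = z ∧ (∀ w, T w = w → w = z) ∧
      Tendsto (fun n => T^[n] x₀) atTop (nhds z) := by
  classical
  set x : ℕ → X := fun n => T^[n] x₀ with hxdef
  have hxB : Bornology.IsBounded (Set.range x) := hx₀
  have hxsucc : ∀ n, x (n + 1) = T (x n) := fun n => Function.iterate_succ_apply' T n x₀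
  have hxadd : ∀ n m, x (n + m) = T^[n] (x m) := fun n m => Function.iterate_add_apply T n m x₀
  set S : ℕ → Set X := fun j => x '' Set.Ici j with hSdef
  have hSsub : ∀ j, S j ⊆ Set.range x := fun j => Set.image_subset_range x _
  have hSb : ∀ j, Bornology.IsBounded (S j) := fun j => hxB.subset (hSsub j)
  set D : ℕ → ℝ := fun j => Metric.diam (S j) with hDdef
  have hD0 : ∀ j, 0 ≤ D j := fun j => Metric.diam_nonneg
  have hDanti : Antitone D := fun i j hij =>
    Metric.diam_mono (Set.image_mono (f := x) (Set.Ici_subset_Ici.mpr hij)) (hSb i)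
  have hmemS : ∀ j a, j ≤ a → x a ∈ S j := fun j a ha => ⟨a, ha, rfl⟩
  have hdistD : ∀ j a b, j ≤ a → j ≤ b → dist (x a) (x b) ≤ D j := fun j a b ha hb =>
    Metric.dist_le_diam_of_mem (hSb j) (hmemS j a ha) (hmemS j b hb)
  -- key inequality
  have key : ∀ ε > (0:ℝ), ∃ N, ∀ j, D (N + j) ≤ ψ (D j) + ε := by
    intro ε hε
    obtain ⟨N, hN⟩ := hunif (Set.range x) hxB ε hε
    refine ⟨N, fun j => ?_⟩
    have hψnn : 0 ≤ ψ (D j) := hψ_nonneg _ (hD0 j)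
    apply Metric.diam_le_of_forall_dist_le (by linarith)
    rintro u ⟨a, (ha : N + j ≤ a), rfl⟩ v ⟨b, (hb : N + j ≤ b), rfl⟩
    set m := a - N with hm
    set k := b - N with hk
    have hma : a = N + m := by omega
    have hkb : b = N + k := by omega
    have hmj : j ≤ m := by omega
    have hkj : j ≤ k := by omega
    have h1 : dist (x a) (x b) ≤ φ N (x m) (x k) := by
      rw [hma, hkb, hxadd, hxadd]; exact hd N (x m) (x k)
    have h2 : φ N (x m) (x k) ≤ φlim (x m) (x k) + ε := by
      have := (abs_le.mp (hN N le_rfl (x m) ⟨m, rfl⟩ (x k) ⟨k, rfl⟩)).2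
      linarith
    have h3 : φlim (x m) (x k) ≤ ψ (max (dist (x m) (x k)) (max (dist (T (x m)) (x m))
        (max (dist (T (x k)) (x k)) (max (dist (T (x k)) (x m)) (dist (T (x m)) (x k)))))) :=
      hφψ (x m) (x k)
    have hMle : max (dist (x m) (x k)) (max (dist (T (x m)) (x m))
        (max (dist (T (x k)) (x k)) (max (dist (T (x k)) (x m)) (dist (T (x m)) (x k))))) ≤ D j := by
      rw [← hxsucc m, ← hxsucc k]
      refine max_le (hdistD j m k hmj hkj) (max_le (hdistD j (m+1) m (by omega) hmj)
        (max_le (hdistD j (k+1) k (by omega) hkj)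
          (max_le (hdistD j (k+1) m (by omega) hmj) (hdistD j (m+1) k (by omega) hkj))))
    have h4 : ψ (max (dist (x m) (x k)) (max (dist (T (x m)) (x m))
        (max (dist (T (x k)) (x k)) (max (dist (T (x k)) (x m)) (dist (T (x m)) (x k)))))) ≤
        ψ (D j) :=
      hψ_mono _ _ (le_trans dist_nonneg (le_max_left _ _)) hMle
    linarith
  set L : ℝ := ⨅ j, D j with hLdef
  have hbdd : BddBelow (Set.range D) := ⟨0, by rintro r ⟨j, rfl⟩; exact hD0 j⟩
  have hLD : ∀ j, L ≤ D j := fun j => ciInf_le hbdd j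
  have hL0 : 0 ≤ L := le_ciInf hD0
  have hDt : Tendsto D atTop (nhds L) := tendsto_atTop_ciInf hDanti hbdd
  have hLψ : ∀ j, L ≤ ψ (D j) := by
    intro j
    refine le_of_forall_pos_le_add fun ε hε => ?_
    obtain ⟨N, hN⟩ := key ε hε
    exact (hLD (N + j)).trans (hN j)
  have hLzero : L = 0 := by
    by_contra hne
    have hLpos : 0 < L := lt_of_le_of_ne hL0 (Ne.symm hne)
    by_cases hcase : ∃ j, D j = L
    · obtain ⟨j, hj⟩ := hcase
      have h := hLψ j
      rw [hj] at h
      exact absurd h (not_le.mpr (hψ_lt L hLpos))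
    · push_neg at hcase
      have hgt : ∀ j, L < D j := fun j => lt_of_le_of_ne (hLD j) (Ne.symm (hcase j))
      have hDt' : Tendsto D atTop (nhdsWithin L (Set.Ioi L)) :=
        tendsto_nhdsWithin_of_tendsto_nhds_of_eventually_within D hDt
          (Filter.Eventually.of_forall hgt)
      have hbψ : Filter.IsBoundedUnder (· ≤ ·) (nhdsWithin L (Set.Ioi L)) ψ := by
        refine ⟨ψ (L + 1), Filter.eventually_map.mpr ?_⟩
        filter_upwards [Ioo_mem_nhdsGT (by linarith : L < L + 1)] with t ht
        exact hψ_mono t (L + 1) (le_trans hL0 ht.1.le) ht.2.le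
      have hls : limsup ψ (nhdsWithin L (Set.Ioi L)) < L :=
        lt_of_le_of_lt (hψ_usc L hL0) (hψ_lt L hLpos)
      have hev : ∀ᶠ t in nhdsWithin L (Set.Ioi L), ψ t < L :=
        eventually_lt_of_limsup_lt hls hbψ
      obtain ⟨j, hj⟩ := (hDt'.eventually hev).exists
      exact absurd (hLψ j) (not_le.mpr hj)
  have hDt0 : Tendsto D atTop (nhds 0) := hLzero ▸ hDt
  have hcauchy : CauchySeq x :=
    cauchySeq_of_le_tendsto_0 D (fun n m N hn hm => hdistD N n m hn hm) hDt0
  obtain ⟨z, hz⟩ := cauchySeq_tendsto_of_complete hcauchy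
  have hTz : T z = z := by
    have h1 : Tendsto (fun n => x (n + 1)) atTop (nhds z) :=
      hz.comp (tendsto_add_atTop_nat 1)
    have h2 : Tendsto (fun n => T (x n)) atTop (nhds (T z)) := (hT.tendsto z).comp hz
    have h3 : (fun n => x (n + 1)) = fun n => T (x n) := funext hxsucc
    rw [h3] at h1
    exact tendsto_nhds_unique h2 h1
  refine ⟨z, hTz, ?_, hz⟩
  intro w hw
  have hiterw : ∀ n, T^[n] w = w := fun n => Function.iterate_fixed hw n
  have hiterz : ∀ n, T^[n] z = z := fun n => Function.iterate_fixed hTz n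
  have hdwz : ∀ n, dist w z ≤ φ n w z := fun n => by
    have := hd n w z
    rwa [hiterw n, hiterz n] at this
  have hlim : dist w z ≤ φlim w z := ge_of_tendsto' (hconv w z) hdwz
  have hMeq : max (dist w z) (max (dist (T w) w) (max (dist (T z) z)
      (max (dist (T z) w) (dist (T w) z)))) = dist w z := by
    rw [hw, hTz, dist_self, dist_self, dist_comm z w, max_self]
    rw [max_eq_right dist_nonneg, max_eq_right dist_nonneg, max_self]
  have hfin : dist w z ≤ ψ (dist w z) := by
    have := hφψ w z
    rw [hMeq] at this
    exact hlim.trans this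
  by_contra hne
  have hpos : 0 < dist w z := dist_pos.mpr fun h => hne (h ▸ rfl)
  exact absurd hfin (not_le.mpr (hψ_lt _ hpos))
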